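/- For a nonempty open bounded convex set Ω ⊂ R^d, d≥2: P(Ω) ≥ (ω_d / (2 d^{d-1})) · diam(Ω) · ρ(Ω)^{d-2}, where ρ is the inradius and ω_d the volume of the unit ball. (Proved via John's ellipsoid: if E(a) ⊂ Ω ⊂ E(da) with semi-axes a_1 ≥ ... ≥ a_d, then P(Ω) ≥ ω_d a_1 a_d^{d-2}.) -/

import Mathlib

open MeasureTheory Metric Set Bornology Pointwise

noncomputable def pCap (d : ℕ) (p : ℝ) (K : Set (EuclideanSpace ℝ (Fin d))) : ℝ :=
  sInf { c : ℝ | ∃ u : EuclideanSpace ℝ (Fin d) → ℝ,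
    Continuous u ∧ Differentiable ℝ u ∧
    (∀ x ∈ K, 1 ≤ u x) ∧
    (∀ ε > 0, volume {x | ε < u x} < ⊤) ∧
    c = ∫ x, ‖fderiv ℝ u x‖ ^ p }

noncomputable def torsion (d : ℕ) (q : ℝ) (Ω : Set (EuclideanSpace ℝ (Fin d))) : ℝ :=
  (sSup { c : ℝ | ∃ ψ : EuclideanSpace ℝ (Fin d) → ℝ,
    Continuous ψ ∧ Differentiable ℝ ψ ∧ tsupport ψ ⊆ Ω ∧ ψ ≠ 0 ∧
    c = (∫ x in Ω, |ψ x|) ^ q / ∫ x in Ω, ‖fderiv ℝ ψ x‖ ^ q }) ^ (1 / (q - 1))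

noncomputable def perim (d : ℕ) (A : Set (EuclideanSpace ℝ (Fin d))) : ℝ :=
  (μH[(d : ℝ) - 1] (frontier A)).toReal

noncomputable def inradius (d : ℕ) (Ω : Set (EuclideanSpace ℝ (Fin d))) : ℝ :=
  sSup { r : ℝ | ∃ x, ball x r ⊆ Ω }

open scoped ENNReal NNReal
open Filter Topology

local notation "⟪" x ", " y "⟫" => @inner ℝ _ _ x y

lemma ray_frontier {X : Type*} [NormedAddCommGroup X] [NormedSpace ℝ X] {U : Set X}
    (hU : IsOpen U) (hb : IsBounded U) {x : X} (hx : x ∈ U) {v : X} (hv : v ≠ 0) :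
    ∃ t : ℝ, 0 ≤ t ∧ x + t • v ∈ frontier U := by
  obtain ⟨R, hR⟩ := hb.subset_ball 0
  have hvn : 0 < ‖v‖ := norm_pos_iff.2 hv
  set S : Set ℝ := {t : ℝ | x + t • v ∈ U} with hS
  have h0 : (0:ℝ) ∈ S := by simpa [hS] using hx
  have hSb : BddAbove S := by
    refine ⟨max 0 ((R + ‖x‖) / ‖v‖), fun t ht => ?_⟩
    rcases le_or_gt t 0 with h | h
    · exact h.trans (le_max_left _ _)
    · refine le_max_of_le_right ?_
      rw [le_div_iff₀ hvn]
      have hm : x + t • v ∈ ball (0:X) R := hR ht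
      have : ‖x + t • v‖ < R := by simpa using hm
      have h2 : t * ‖v‖ = ‖t • v‖ := by
        rw [norm_smul, Real.norm_eq_abs, abs_of_pos h]
      have : ‖t • v‖ - ‖x‖ ≤ ‖x + t • v‖ := by
        have h3 : ‖t • v‖ ≤ ‖x + t • v‖ + ‖x‖ := by
          calc ‖t • v‖ = ‖(x + t • v) - x‖ := by rw [add_sub_cancel_left]
            _ ≤ ‖x + t • v‖ + ‖x‖ := norm_sub_le _ _
        linarith
      linarith
  set T := sSup S with hT
  have hT0 : 0 ≤ T := le_csSup hSb h0
  refine ⟨T, hT0, ?_, ?_⟩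
  · -- closure membership
    have h1 : T ∈ closure S := csSup_mem_closure ⟨0, h0⟩ hSb
    have hcont : Continuous fun t : ℝ => x + t • v := by continuity
    have : x + T • v ∈ closure ((fun t : ℝ => x + t • v) '' S) := by
      have := image_closure_subset_closure_image (s := S) hcont
      exact this ⟨T, h1, rfl⟩
    refine closure_mono ?_ this
    rintro _ ⟨t, ht, rfl⟩; exact ht
  · -- not in U (interior)
    rw [hU.interior_eq]
    intro hmem
    obtain ⟨ε, hε, hball⟩ := Metric.isOpen_iff.1 hU _ hmem
    have hδ : (0:ℝ) < ε / (2 * ‖v‖) := by positivity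
    have : T + ε / (2 * ‖v‖) ∈ S := by
      apply hball
      have : dist (x + (T + ε / (2 * ‖v‖)) • v) (x + T • v) = (ε / (2 * ‖v‖)) * ‖v‖ := by
        rw [dist_eq_norm]
        have : x + (T + ε / (2 * ‖v‖)) • v - (x + T • v) = (ε / (2 * ‖v‖)) • v := by
          module
        rw [this, norm_smul, Real.norm_eq_abs, abs_of_pos hδ]
      rw [mem_ball, this]
      rw [div_mul_eq_mul_div, mul_comm, mul_div_assoc]
      calc ‖v‖ * (ε / (2 * ‖v‖)) = ε * (‖v‖ / (2*‖v‖)) := by ring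
        _ = ε / 2 := by rw [div_mul_eq_div_div_swap]; field_simp
        _ < ε := by linarith
    have := le_csSup hSb this
    linarith


lemma exists_proj {F : Type*} [NormedAddCommGroup F] [InnerProductSpace ℝ F] [CompleteSpace F]
    {K : Set F} (hK : Convex ℝ K) (hcl : IsClosed K) (hne : K.Nonempty) :
    ∃ π : F → F, (∀ u, π u ∈ K) ∧ LipschitzWith 1 π ∧ (∀ z ∈ K, π z = z) ∧
      ∀ u, ∀ c : ℝ, 0 ≤ c → π (π u + c • (u - π u)) = π u := by
  have hex : ∀ u : F, ∃ v, v ∈ K ∧ ∀ y ∈ K, ⟪u - v, y - v⟫ ≤ 0 := by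
    intro u
    obtain ⟨v, hvK, hv⟩ := exists_norm_eq_iInf_of_complete_convex hne hcl.isComplete hK u
    exact ⟨v, hvK, (norm_eq_iInf_iff_real_inner_le_zero hK hvK).1 hv⟩
  have huniq : ∀ (u v w : F), v ∈ K → w ∈ K → (∀ y ∈ K, ⟪u - v, y - v⟫ ≤ 0) →
      (∀ y ∈ K, ⟪u - w, y - w⟫ ≤ 0) → v = w := by
    intro u v w hv hw h1 h2
    have e1 := h1 w hw
    have e2 := h2 v hv
    have k1 : (⟪u - v, w - v⟫ : ℝ) - ⟪u - w, w - v⟫ = ‖w - v‖ ^ 2 := by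
      rw [← inner_sub_left]
      have : (u - v) - (u - w) = w - v := by abel
      rw [this, real_inner_self_eq_norm_sq]
    have k2 : (⟪u - w, v - w⟫ : ℝ) = -⟪u - w, w - v⟫ := by
      rw [← inner_neg_right]; congr 1; abel
    have : ‖w - v‖ ^ 2 ≤ 0 := by rw [← k1]; rw [k2] at e2; linarith
    have : ‖w - v‖ = 0 := by nlinarith [norm_nonneg (w - v)]
    have : w - v = 0 := by rwa [norm_eq_zero] at this
    linear_combination (norm := abel) -this
  classical
  set π : F → F := fun u => (hex u).choose with hπ
  have hmem : ∀ u, π u ∈ K := fun u => (hex u).choose_spec.1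
  have hvar : ∀ u, ∀ y ∈ K, ⟪u - π u, y - π u⟫ ≤ 0 := fun u => (hex u).choose_spec.2
  refine ⟨π, hmem, ?_, ?_, ?_⟩
  · -- Lipschitz
    refine LipschitzWith.of_dist_le_mul fun u w => ?_
    simp only [NNReal.coe_one, one_mul]
    rw [dist_eq_norm, dist_eq_norm]
    set e := π u - π w with he
    have h1 : ⟪u - π u, π w - π u⟫ ≤ 0 := hvar u _ (hmem w)
    have h2 : ⟪w - π w, π u - π w⟫ ≤ 0 := hvar w _ (hmem u)
    have key : ‖e‖ ^ 2 ≤ ⟪u - w, e⟫ := by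
      have expand : (⟪u - w, e⟫ : ℝ) = ‖e‖ ^ 2 + (-⟪u - π u, π w - π u⟫) + (-⟪w - π w, π u - π w⟫) := by
        have l1 : (⟪u - w, e⟫ : ℝ) = ⟪u - π u, e⟫ - ⟪w - π w, e⟫ + ⟪π u - π w, e⟫ := by
          have : u - w = (u - π u) - (w - π w) + (π u - π w) := by abel
          rw [this, inner_add_left, inner_sub_left]
        have l2 : (⟪u - π u, e⟫ : ℝ) = -⟪u - π u, π w - π u⟫ := by
          rw [← inner_neg_right]; congr 1; rw [he]; abel
        have l3 : (⟪w - π w, e⟫ : ℝ) = ⟪w - π w, π u - π w⟫ := by rw [he]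
        have l4 : (⟪π u - π w, e⟫ : ℝ) = ‖e‖ ^ 2 := by rw [he, real_inner_self_eq_norm_sq]
        rw [l1, l2, l3, l4]; ring
      rw [expand]; linarith
    have hb := real_inner_le_norm (u - w) e
    rcases eq_or_lt_of_le (norm_nonneg e) with h | h
    · rw [← h]; exact norm_nonneg _
    · nlinarith
  · -- identity on K
    intro z hz
    exact huniq z (π z) z (hmem z) hz (hvar z) (by intro y hy; simp)
  · -- ray
    intro u c hc
    refine huniq _ _ _ (hmem _) (hmem u) (hvar _) ?_
    intro y hy
    have : (π u + c • (u - π u)) - π u = c • (u - π u) := by abel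
    rw [this, real_inner_smul_left]
    exact mul_nonpos_of_nonneg_of_nonpos hc (hvar u y hy)


lemma hausdorff_pi_eq {m : ℕ} : (μH[(m:ℝ)] : Measure (Fin m → ℝ)) = volume := by
  have := MeasureTheory.hausdorffMeasure_pi_real (ι := Fin m)
  simpa using this

lemma volume_le_hausdorff {m : ℕ} (s : Set (Fin m → ℝ)) : volume s ≤ μH[(m:ℝ)] s := by
  rw [hausdorff_pi_eq]

lemma coord_abs_le_norm {m : ℕ} (x : EuclideanSpace ℝ (Fin m)) (i : Fin m) : |x i| ≤ ‖x‖ := by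
  rw [EuclideanSpace.norm_eq]
  have h1 : |x i| = Real.sqrt (|x i| ^ 2) := by
    rw [Real.sqrt_sq_eq_abs, abs_abs]
  rw [h1]
  apply Real.sqrt_le_sqrt
  have := Finset.single_le_sum (f := fun j => ‖x j‖ ^ 2) (fun j _ => by positivity)
    (Finset.mem_univ i)
  simpa [Real.norm_eq_abs] using this

lemma hausdorff_lt_top_of_bounded {m : ℕ} {s : Set (EuclideanSpace ℝ (Fin m))}
    (hs : IsBounded s) : μH[(m:ℝ)] s < ⊤ := by
  set e := WithLp.equiv 2 (Fin m → ℝ)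
  have hm : (0:ℝ) ≤ (m:ℝ) := by positivity
  have hanti := PiLp.antilipschitzWith_ofLp 2 (fun _ : Fin m => ℝ)
  have hsymm : LipschitzWith (Fintype.card (Fin m) ^ (1 / (2:ℝ≥0∞)).toReal) e.symm := by
    intro u v
    simpa [e] using hanti (e.symm u) (e.symm v)
  have himg : s = e.symm '' (e '' s) := by
    rw [Equiv.symm_image_image]
  rw [himg]
  calc μH[(m:ℝ)] (e.symm '' (e '' s))
      ≤ (Fintype.card (Fin m) ^ (1 / (2:ℝ≥0∞)).toReal : ℝ≥0) ^ (m:ℝ) * μH[(m:ℝ)] (e '' s) :=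
        hsymm.hausdorffMeasure_image_le hm _
    _ < ⊤ := by
        apply ENNReal.mul_lt_top
        · exact ENNReal.rpow_lt_top_of_nonneg hm ENNReal.coe_ne_top
        · have h1 : μH[(m:ℝ)] (e '' s) = volume (e '' s) := by rw [hausdorff_pi_eq]
          rw [h1]
          have hbd : IsBounded (e '' s) := ((PiLp.lipschitzWith_ofLp 2 _).isBounded_image hs)
          calc volume (e '' s) ≤ volume (closure (e '' s)) := measure_mono subset_closure
            _ < ⊤ := hbd.isCompact_closure.measure_lt_top

lemma open_convex_interior_closure {X : Type*} [NormedAddCommGroup X] [NormedSpace ℝ X]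
    {Ω : Set X} (hΩ : IsOpen Ω) (hconv : Convex ℝ Ω) (hne : Ω.Nonempty) :
    interior (closure Ω) = Ω := by
  refine Subset.antisymm ?_ (hΩ.subset_interior_closure)
  intro x hx
  obtain ⟨x₀, hx₀⟩ := hne
  obtain ⟨ε, hε, hball⟩ := Metric.isOpen_iff.1 isOpen_interior x hx
  -- y := x + t (x - x₀) for small t > 0 lies in closure Ω
  by_cases hxx : x = x₀
  · rwa [hxx]
  have hd : 0 < ‖x - x₀‖ := by
    rw [norm_pos_iff]; intro h; exact hxx (sub_eq_zero.1 h)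
  set t : ℝ := ε / (2 * ‖x - x₀‖) with ht
  have htpos : 0 < t := by positivity
  have hy : x + t • (x - x₀) ∈ closure Ω := by
    apply interior_subset
    apply hball
    rw [mem_ball, dist_eq_norm]
    have : x + t • (x - x₀) - x = t • (x - x₀) := by abel
    rw [this, norm_smul, Real.norm_eq_abs, abs_of_pos htpos, ht]
    rw [div_mul_eq_mul_div, mul_comm]
    rw [div_lt_iff₀ (by positivity)]
    nlinarith
  -- x ∈ openSegment x₀ y
  have hseg : x ∈ openSegment ℝ x₀ (x + t • (x - x₀)) := by
    refine ⟨t / (1 + t), 1 / (1 + t), by positivity, by positivity, ?_, ?_⟩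
    · rw [← add_div, div_eq_one_iff_eq (by positivity : (1:ℝ)+t ≠ 0)]; ring
    · have h1t : (1:ℝ) + t ≠ 0 := by positivity
      rw [smul_add, smul_smul]
      match_scalars <;> field_simp <;> ring
  have := hconv.openSegment_interior_closure_subset_interior
    (by rwa [hΩ.interior_eq] : x₀ ∈ interior Ω) hy hseg
  rwa [hΩ.interior_eq] at this


noncomputable def insF {m : ℕ} (j : Fin (m+1)) (A : ℝ) :
    EuclideanSpace ℝ (Fin m) → EuclideanSpace ℝ (Fin (m+1)) :=
  fun y => (WithLp.equiv 2 (∀ _ : Fin (m+1), ℝ)).symm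
    (j.insertNth A ((WithLp.equiv 2 (∀ _ : Fin m, ℝ)) y))

lemma insF_apply {m : ℕ} (j : Fin (m+1)) (A : ℝ) (y : EuclideanSpace ℝ (Fin m)) (i : Fin (m+1)) :
    insF j A y i = (j.insertNth A (fun k => y k) : ∀ _ : Fin (m+1), ℝ) i := rfl

lemma insertNth_isometry {m : ℕ} (j : Fin (m+1)) (A : ℝ) :
    Isometry (insF j A) := by
  apply Isometry.of_dist_eq
  intro y y'
  rw [EuclideanSpace.dist_eq (insF j A y) (insF j A y'), EuclideanSpace.dist_eq y y']
  congr 1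
  have h : ∀ i, dist (insF j A y i) (insF j A y' i) ^ 2
      = (fun i => dist ((j.insertNth A (fun k => y k) : ∀ _ : Fin (m+1), ℝ) i)
          ((j.insertNth A (fun k => y' k) : ∀ _ : Fin (m+1), ℝ) i) ^ 2) i :=
    fun i => by rw [insF_apply, insF_apply]
  rw [Finset.sum_congr rfl (fun i _ => h i)]
  rw [Fin.sum_univ_succAbove
    (fun i => dist ((j.insertNth A (fun k => y k) : ∀ _ : Fin (m+1), ℝ) i)
      ((j.insertNth A (fun k => y' k) : ∀ _ : Fin (m+1), ℝ) i) ^ 2) j]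
  simp [Fin.insertNth_apply_same, Fin.insertNth_apply_succAbove]

lemma box_bounded {m : ℕ} (R : ℝ) :
    IsBounded {y : EuclideanSpace ℝ (Fin m) | ∀ k, |y k| ≤ R} := by
  rw [isBounded_iff_forall_norm_le]
  refine ⟨Real.sqrt (m * R^2), fun y hy => ?_⟩
  rw [EuclideanSpace.norm_eq]
  apply Real.sqrt_le_sqrt
  calc ∑ i, ‖y i‖ ^ 2 ≤ ∑ _i : Fin m, R^2 := by
        apply Finset.sum_le_sum
        intro i _
        have := hy i
        rw [Real.norm_eq_abs]
        nlinarith [abs_nonneg (y i)]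
    _ = m * R^2 := by simp [Finset.sum_const, mul_comm]

lemma frontier_hausdorff_lt_top {m : ℕ} {Ω : Set (EuclideanSpace ℝ (Fin (m+1)))}
    (hΩ : IsOpen Ω) (hne : Ω.Nonempty) (hbdd : IsBounded Ω) (hconv : Convex ℝ Ω) :
    μH[(m:ℝ)] (frontier Ω) < ⊤ := by
  classical
  obtain ⟨R₀, hR₀⟩ := isBounded_iff_forall_norm_le.1 hbdd.closure
  have hR₀0 : 0 ≤ R₀ := by
    obtain ⟨x, hx⟩ := hne
    exact le_trans (norm_nonneg x) (hR₀ x (subset_closure hx))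
  set R : ℝ := R₀ + 2 with hR
  set Qo : Set (EuclideanSpace ℝ (Fin (m+1))) := {x | ∀ i, |x i| < R} with hQo
  have hQo_open : IsOpen Qo := by
    have : Qo = ⋂ i, ((fun x : EuclideanSpace ℝ (Fin (m+1)) => x i) ⁻¹' (Ioo (-R) R)) := by
      ext x; simp [hQo, abs_lt]
    rw [this]
    apply isOpen_iInter_of_finite
    intro i
    have hc : Continuous (fun x : EuclideanSpace ℝ (Fin (m+1)) => x i) :=
      (continuous_apply i).comp (PiLp.continuous_ofLp 2 _)
    exact isOpen_Ioo.preimage hc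
  have hQo_bounded : IsBounded Qo := by
    apply (box_bounded (m := m+1) R).subset
    intro x hx k
    exact (hx k).le
  -- faces cover frontier of the cube
  set box : Set (EuclideanSpace ℝ (Fin m)) := {y | ∀ k, |y k| ≤ R} with hbox
  have hfaces : frontier Qo ⊆
      ⋃ (j : Fin (m+1)), ⋃ (σ : Bool), (insF j (cond σ R (-R))) '' box := by
    intro x hx
    have hxc : x ∈ closure Qo := hx.1
    have hxn : x ∉ Qo := by
      intro h; exact hx.2 (by rwa [hQo_open.interior_eq])
    have hxQc : ∀ i, |x i| ≤ R := by
      intro i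
      have hcl : closure Qo ⊆ {x : EuclideanSpace ℝ (Fin (m+1)) | |x i| ≤ R} := by
        apply closure_minimal
        · intro y hy; exact (hy i).le
        · have hc : Continuous (fun x : EuclideanSpace ℝ (Fin (m+1)) => x i) :=
            (continuous_apply i).comp (PiLp.continuous_ofLp 2 _)
          exact isClosed_le hc.abs continuous_const
      exact hcl hxc
    obtain ⟨j, hj⟩ : ∃ j, ¬ |x j| < R := by
      by_contra h
      push_neg at h
      exact hxn h
    have hxj : |x j| = R := le_antisymm (hxQc j) (not_lt.1 hj)
    have hcases : x j = R ∨ x j = -R := by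
      rcases abs_eq (by linarith : (0:ℝ) ≤ R) |>.1 hxj with h | h
      · exact Or.inl h
      · exact Or.inr h
    refine mem_iUnion.2 ⟨j, mem_iUnion.2 ⟨if x j = R then true else false, ?_⟩⟩
    set y₀ : EuclideanSpace ℝ (Fin m) :=
      (WithLp.equiv 2 (∀ _ : Fin m, ℝ)).symm (j.removeNth fun k => x k) with hy₀
    have hy₀k : ∀ k, y₀ k = x (j.succAbove k) := fun k => rfl
    have hkey : ∀ (A : ℝ), A = x j → insF j A y₀ = x := by
      intro A hA
      apply (WithLp.equiv 2 (∀ _ : Fin (m+1), ℝ)).injective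
      funext i
      show insF j A y₀ i = x i
      rw [insF_apply]
      have h2 : (fun k => y₀ k) = j.removeNth (fun k => x k) := by
        funext k; exact hy₀k k
      rw [h2, hA, show x j = (fun k => x k) j from rfl, Fin.insertNth_self_removeNth]
    refine ⟨y₀, ?_, ?_⟩
    · intro k
      rw [hy₀k]
      exact hxQc (j.succAbove k)
    · rcases hcases with h | h
      · simp only [h, if_pos rfl, cond_true]
        exact hkey R h.symm
      · have hne' : x j ≠ R := by rw [h]; intro hc; linarith
        simp only [if_neg hne', cond_false]
        exact hkey (-R) h.symm
  have hfrQo_fin : μH[(m:ℝ)] (frontier Qo) < ⊤ := by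
    refine lt_of_le_of_lt (measure_mono hfaces) ?_
    refine lt_of_le_of_lt (measure_iUnion_le _) ?_
    rw [tsum_fintype]
    apply ENNReal.sum_lt_top.2
    intro j _
    refine lt_of_le_of_lt (measure_iUnion_le _) ?_
    rw [tsum_fintype]
    apply ENNReal.sum_lt_top.2
    intro σ _
    exact ((insertNth_isometry j (cond σ R (-R))).hausdorffMeasure_image
      (Or.inl (by positivity)) box).trans_lt (hausdorff_lt_top_of_bounded (box_bounded R))
  -- projection
  set K : Set (EuclideanSpace ℝ (Fin (m+1))) := closure Ω with hK
  obtain ⟨π, hπK, hπlip, hπid, hπray⟩ :=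
    exists_proj (hconv.closure) isClosed_closure (hne.closure)
  have hcover : frontier Ω ⊆ π '' (frontier Qo) := by
    intro z hz
    have hzK : z ∈ K := hz.1
    have hzfrK : z ∈ closure Kᶜ := by
      have h1 : z ∉ interior K := by
        rw [hK, open_convex_interior_closure hΩ hconv hne]
        rw [hΩ.frontier_eq] at hz
        exact hz.2
      have h2 : z ∈ frontier K := by
        rw [isClosed_closure.frontier_eq]
        exact ⟨hzK, h1⟩
      rw [frontier_eq_closure_inter_closure] at h2
      exact h2.2
    obtain ⟨u, huK, hulim⟩ := mem_closure_iff_seq_limit.1 hzfrK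
    obtain ⟨N, hN⟩ := (Metric.tendsto_atTop.1 hulim) 1 one_pos
    set u' : ℕ → EuclideanSpace ℝ (Fin (m+1)) := fun n => u (n + N) with hu'
    have hu'K : ∀ n, u' n ∉ K := fun n => huK (n + N)
    have hu'lim : Tendsto u' atTop (𝓝 z) := hulim.comp (tendsto_add_atTop_nat N)
    have hu'Qo : ∀ n, u' n ∈ Qo := by
      intro n i
      have hd : dist (u' n) z < 1 := hN (n + N) (Nat.le_add_left N n)
      have : ‖u' n‖ ≤ ‖z‖ + 1 := by
        have ht := dist_triangle (u' n) z 0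
        simp only [dist_zero_right] at ht
        linarith
      have hzR : ‖z‖ ≤ R₀ := hR₀ z hzK
      calc |u' n i| ≤ ‖u' n‖ := coord_abs_le_norm _ _
        _ ≤ ‖z‖ + 1 := this
        _ ≤ R₀ + 1 := by linarith
        _ < R := by rw [hR]; linarith
    have hvne : ∀ n, u' n - π (u' n) ≠ 0 := by
      intro n h
      exact hu'K n (by rw [sub_eq_zero] at h; rw [h]; exact hπK _)
    have hw : ∀ n, ∃ t : ℝ, 0 ≤ t ∧ u' n + t • (u' n - π (u' n)) ∈ frontier Qo :=
      fun n => ray_frontier hQo_open hQo_bounded (hu'Qo n) (hvne n)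
    set w : ℕ → EuclideanSpace ℝ (Fin (m+1)) :=
      fun n => u' n + (hw n).choose • (u' n - π (u' n)) with hwdef
    have hwfr : ∀ n, w n ∈ frontier Qo := fun n => (hw n).choose_spec.2
    have hπw : ∀ n, π (w n) = π (u' n) := by
      intro n
      have ht0 := (hw n).choose_spec.1
      have : w n = π (u' n) + (1 + (hw n).choose) • (u' n - π (u' n)) := by
        rw [hwdef]; module
      rw [this]
      exact hπray (u' n) _ (by linarith)
    have hfrcpt : IsCompact (frontier Qo) :=
      hQo_bounded.isCompact_closure.of_isClosed_subset isClosed_frontier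
        frontier_subset_closure
    obtain ⟨wlim, hwlim, φ, hφmono, hφlim⟩ := hfrcpt.tendsto_subseq hwfr
    refine ⟨wlim, hwlim, ?_⟩
    have l1 : Tendsto (fun n => π (w (φ n))) atTop (𝓝 (π wlim)) :=
      (hπlip.continuous.tendsto wlim).comp hφlim
    have l2 : Tendsto (fun n => π (w (φ n))) atTop (𝓝 z) := by
      have he : (fun n => π (w (φ n))) = fun n => π (u' (φ n)) := by
        funext n; exact hπw (φ n)
      rw [he]
      have : Tendsto (fun n => π (u' (φ n))) atTop (𝓝 (π z)) :=
        (hπlip.continuous.tendsto z).comp (hu'lim.comp hφmono.tendsto_atTop)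
      rwa [hπid z hzK] at this
    exact tendsto_nhds_unique l1 l2
  calc μH[(m:ℝ)] (frontier Ω) ≤ μH[(m:ℝ)] (π '' (frontier Qo)) := measure_mono hcover
    _ ≤ (1:ℝ≥0∞) ^ (m:ℝ) * μH[(m:ℝ)] (frontier Qo) := by
        have := hπlip.hausdorffMeasure_image_le (by positivity : (0:ℝ) ≤ (m:ℝ)) (frontier Qo)
        simpa using this
    _ < ⊤ := by rw [ENNReal.one_rpow, one_mul]; exact hfrQo_fin


/-- Projection setup: there is a convex set `C` in `ℝ^(n+1)` whose closure has volume
dominated by the boundary Hausdorff measure, containing a euclidean ball of radius `r`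
around `c` and, in its closure, two points `a b` differing only in coordinate `0` by
`dist p q`. -/
lemma project_setup {n : ℕ} {Ω : Set (EuclideanSpace ℝ (Fin (n+2)))}
    (hΩ : IsOpen Ω) (hbdd : IsBounded Ω) (hconv : Convex ℝ Ω)
    {p q : EuclideanSpace ℝ (Fin (n+2))} (hp : p ∈ closure Ω) (hq : q ∈ closure Ω)
    (hpq : p ≠ q)
    {r : ℝ} (hr : 0 < r) {x₀ : EuclideanSpace ℝ (Fin (n+2))} (hball : ball x₀ r ⊆ Ω) :
    ∃ (C : Set (Fin (n+1) → ℝ)) (a b c : Fin (n+1) → ℝ),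
      Convex ℝ C ∧
      volume (closure C) ≤ μH[((n:ℝ)+1)] (frontier Ω) ∧
      a ∈ closure C ∧ b ∈ closure C ∧
      a 0 - b 0 = dist p q ∧ (∀ j : Fin n, a j.succ = b j.succ) ∧
      (∀ w : Fin (n+1) → ℝ, (∑ i, (w i - c i)^2) < r^2 → w ∈ C) := by
  classical
  have hD : 0 < ‖p - q‖ := by
    rw [norm_pos_iff, sub_ne_zero]; exact hpq
  set u : EuclideanSpace ℝ (Fin (n+2)) := ‖p - q‖⁻¹ • (p - q) with hu
  have hunorm : ‖u‖ = 1 := by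
    rw [hu, norm_smul, norm_inv, norm_norm, inv_mul_cancel₀ hD.ne']
  -- orthonormal basis with B 1 = u
  obtain ⟨B, hB1⟩ : ∃ B : OrthonormalBasis (Fin (n+2)) ℝ (EuclideanSpace ℝ (Fin (n+2))),
      B 1 = u := by
    have hcard : Module.finrank ℝ (EuclideanSpace ℝ (Fin (n+2))) = Fintype.card (Fin (n+2)) := by
      simp [finrank_euclideanSpace]
    have hsub : Subsingleton ↥(({1} : Set (Fin (n+2)))) := by
      rw [Set.subsingleton_coe]; exact subsingleton_singleton
    have horth : Orthonormal ℝ (Set.restrict {1} (fun _ : Fin (n+2) => u)) := by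
      constructor
      · intro i; exact hunorm
      · intro i j hij; exact absurd (Subsingleton.elim i j) hij
    obtain ⟨B, hB⟩ := horth.exists_orthonormalBasis_extension_of_card_eq hcard
    exact ⟨B, hB 1 rfl⟩
  set F : EuclideanSpace ℝ (Fin (n+2)) → (Fin (n+1) → ℝ) :=
    fun x j => B.repr x j.succ with hF
  have hFlin : IsLinearMap ℝ F := by
    constructor
    · intro x y; funext j; simp [hF, map_add, PiLp.add_apply]
    · intro t x; funext j; simp [hF, _root_.map_smul, PiLp.smul_apply]
  have hFlip : LipschitzWith 1 F := by
    apply LipschitzWith.of_dist_le_mul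
    intro x y
    rw [NNReal.coe_one, one_mul]
    rw [dist_pi_le_iff dist_nonneg]
    intro j
    rw [Real.dist_eq]
    have h1 : F x j - F y j = B.repr (x - y) j.succ := by
      simp [hF, map_sub, PiLp.sub_apply]
    rw [h1]
    calc |B.repr (x - y) j.succ| ≤ ‖B.repr (x - y)‖ := coord_abs_le_norm _ _
      _ = ‖x - y‖ := B.repr.norm_map _
      _ = dist x y := (dist_eq_norm x y).symm
  set C : Set (Fin (n+1) → ℝ) := F '' Ω with hC
  have hCconv : Convex ℝ C := hconv.is_linear_image hFlin
  refine ⟨C, F p, F q, F x₀, hCconv, ?_, ?_, ?_, ?_, ?_, ?_⟩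
  · -- volume (closure C) ≤ μH
    have hCsub : C ⊆ F '' (frontier Ω) := by
      rintro _ ⟨x, hx, rfl⟩
      have hB0 : (B 0 : EuclideanSpace ℝ (Fin (n+2))) ≠ 0 := by
        intro h
        have := B.orthonormal.1 0
        rw [h, norm_zero] at this; norm_num at this
      obtain ⟨t, ht0, htfr⟩ := ray_frontier hΩ hbdd hx hB0
      refine ⟨x + t • B 0, htfr, ?_⟩
      funext j
      have h4 : B.repr (x + t • B 0) j.succ
          = B.repr x j.succ + t * B.repr (B 0) j.succ := by
        simp [map_add, _root_.map_smul, PiLp.add_apply, PiLp.smul_apply]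
      show B.repr (x + t • B 0) j.succ = B.repr x j.succ
      rw [h4, B.repr_self, EuclideanSpace.single_apply,
        if_neg (Fin.succ_ne_zero j)]
      simp
    have h1 : volume (closure C) ≤ volume C := by
      have hsub2 : closure C ⊆ C ∪ frontier C := by
        intro z hz
        by_cases h : z ∈ C
        · exact Or.inl h
        · exact Or.inr ⟨hz, fun hint => h (interior_subset hint)⟩
      calc volume (closure C) ≤ volume C + volume (frontier C) :=
            le_trans (measure_mono hsub2) (measure_union_le _ _)
        _ = volume C := by rw [hCconv.addHaar_frontier volume, add_zero]
    refine le_trans h1 ?_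
    calc volume C ≤ volume (F '' frontier Ω) := measure_mono hCsub
      _ = μH[((n+1 : ℕ):ℝ)] (F '' frontier Ω) := by rw [hausdorff_pi_eq]
      _ ≤ (1:ℝ≥0∞) ^ ((n+1:ℕ):ℝ) * μH[((n+1:ℕ):ℝ)] (frontier Ω) :=
          hFlip.hausdorffMeasure_image_le (by positivity) _
      _ = μH[((n:ℝ)+1)] (frontier Ω) := by
          rw [ENNReal.one_rpow, one_mul]
          norm_num
  · exact image_closure_subset_closure_image hFlip.continuous ⟨p, hp, rfl⟩
  · exact image_closure_subset_closure_image hFlip.continuous ⟨q, hq, rfl⟩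
  · -- a 0 - b 0 = dist p q
    have h1 : F p 0 - F q 0 = B.repr (p - q) (Fin.succ 0) := by
      simp [hF, map_sub, PiLp.sub_apply]
    have h2 : p - q = ‖p - q‖ • u := by
      rw [hu, smul_smul, mul_inv_cancel₀ hD.ne', one_smul]
    rw [h1, h2, _root_.map_smul, PiLp.smul_apply, ← hB1, B.repr_self,
      EuclideanSpace.single_apply, Fin.succ_zero_eq_one]
    rw [if_pos rfl, dist_eq_norm]
    simp
  · -- equal tail coordinates
    intro j
    have h1 : F p j.succ - F q j.succ = B.repr (p - q) (Fin.succ j.succ) := by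
      simp [hF, map_sub, PiLp.sub_apply]
    have h2 : p - q = ‖p - q‖ • u := by
      rw [hu, smul_smul, mul_inv_cancel₀ hD.ne', one_smul]
    have h3 : (Fin.succ j.succ) ≠ 1 := by
      intro h
      rw [← Fin.succ_zero_eq_one] at h
      exact Fin.succ_ne_zero j (Fin.succ_injective _ h)
    have : F p j.succ - F q j.succ = 0 := by
      rw [h1, h2, _root_.map_smul, PiLp.smul_apply, ← hB1, B.repr_self,
        EuclideanSpace.single_apply, if_neg h3]
      simp
    linarith [this]
  · -- euclidean ball inside C
    intro w hw
    set g : ∀ _ : Fin (n+2), ℝ := Fin.cases 0 (fun j => w j - F x₀ j) with hg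
    set gE : EuclideanSpace ℝ (Fin (n+2)) := (WithLp.equiv 2 (∀ _ : Fin (n+2), ℝ)).symm g with hgE
    have hgEap : ∀ i, gE i = g i := fun i => rfl
    set z : EuclideanSpace ℝ (Fin (n+2)) := x₀ + B.repr.symm gE with hz
    have hzb : z ∈ ball x₀ r := by
      rw [mem_ball, dist_eq_norm, hz]
      have : x₀ + B.repr.symm gE - x₀ = B.repr.symm gE := by abel
      rw [this, B.repr.symm.norm_map, EuclideanSpace.norm_eq]
      rw [show (∑ i, ‖gE i‖^2) = ∑ i, (g i)^2 by
        refine Finset.sum_congr rfl fun i _ => ?_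
        rw [hgEap, Real.norm_eq_abs, sq_abs]]
      rw [Fin.sum_univ_succ]
      rw [Real.sqrt_lt' hr]
      simpa [hg] using hw
    refine ⟨z, hball hzb, ?_⟩
    funext j
    have h5 : B.repr z j.succ = B.repr x₀ j.succ + gE j.succ := by
      rw [hz, map_add, PiLp.add_apply, B.repr.apply_symm_apply]
    show B.repr z j.succ = w j
    rw [h5, hgEap]
    show B.repr x₀ j.succ + g j.succ = w j
    simp [hg, hF]


lemma seg_bound {C : Set (Fin 1 → ℝ)} (hCconv : Convex ℝ C) {a b : Fin 1 → ℝ}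
    (ha : a ∈ closure C) (hb : b ∈ closure C) {D : ℝ} (hD : 0 ≤ D) (hab : a 0 - b 0 = D) :
    ENNReal.ofReal D ≤ volume (closure C) := by
  have hseg : segment ℝ b a ⊆ closure C := hCconv.closure.segment_subset hb ha
  have hkey : segment ℝ b a = (MeasurableEquiv.funUnique (Fin 1) ℝ) ⁻¹' (Icc (b 0) (a 0)) := by
    have hba : b 0 ≤ a 0 := by linarith
    ext x
    have happ : (MeasurableEquiv.funUnique (Fin 1) ℝ) x = x 0 := rfl
    rw [mem_preimage, happ, ← segment_eq_Icc hba]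
    constructor
    · rintro ⟨θ, σ, hθ, hσ, hsum, rfl⟩
      exact ⟨θ, σ, hθ, hσ, hsum, by simp⟩
    · rintro ⟨θ, σ, hθ, hσ, hsum, hx0⟩
      refine ⟨θ, σ, hθ, hσ, hsum, ?_⟩
      funext i
      rw [Fin.eq_zero i]
      simpa using hx0
  calc ENNReal.ofReal D = volume (Icc (b 0) (a 0)) := by
        rw [Real.volume_Icc, hab]
    _ = volume (segment ℝ b a) := by
        rw [hkey]; exact ((volume_preserving_funUnique (Fin 1) ℝ).measure_preimage
          measurableSet_Icc.nullMeasurableSet).symm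
    _ ≤ volume (closure C) := measure_mono hseg

lemma cyl_bound {n : ℕ} (hn : 0 < n) {C : Set (Fin (n+1) → ℝ)} (hCconv : Convex ℝ C)
    {a b c : Fin (n+1) → ℝ} (ha : a ∈ closure C) (hb : b ∈ closure C)
    {D : ℝ} (hD : 0 ≤ D) (hab0 : a 0 - b 0 = D) (habs : ∀ j : Fin n, a j.succ = b j.succ)
    {r : ℝ} (hr : 0 < r) (hBC : ∀ w : Fin (n+1) → ℝ, (∑ i, (w i - c i)^2) < r^2 → w ∈ C) :
    ENNReal.ofReal ((D/2) * ((r/2)^n * (Real.sqrt Real.pi ^ n / Real.Gamma (n/2+1)))) ≤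
      volume (closure C) := by
  haveI : Nonempty (Fin n) := ⟨⟨0, hn⟩⟩
  set M₀ : ℝ := (c 0 + b 0)/2 with hM₀
  set ct : Fin n → ℝ := fun j => (c j.succ + b j.succ)/2 with hct
  set Bt : Set (Fin n → ℝ) := {ζ | ∑ j, (ζ j - ct j)^2 < (r/2)^2} with hBt
  set Z : Set (Fin (n+1) → ℝ) :=
    {x | x 0 ∈ Ioo M₀ (M₀ + D/2) ∧ (fun j => x (Fin.succ j)) ∈ Bt} with hZ
  -- Z is inside closure C
  have hZsub : Z ⊆ closure C := by
    rcases eq_or_lt_of_le hD with hD0 | hD0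
    · intro x hx
      exfalso
      obtain ⟨⟨h1, h2⟩, -⟩ := hx
      rw [← hD0] at h2
      simp at h2
      linarith
    intro x hx
    obtain ⟨⟨hx1, hx2⟩, hxt⟩ := hx
    set s : ℝ := (2 * x 0 - c 0 - b 0)/D with hs
    have hs0 : 0 < s := by
      apply div_pos _ hD0
      rw [hM₀] at hx1
      linarith
    have hs1 : s < 1 := by
      rw [hs, div_lt_one hD0]
      rw [hM₀] at hx2
      linarith
    have hsD : s * D = 2 * x 0 - c 0 - b 0 := by
      rw [hs, div_mul_cancel₀ _ hD0.ne']
    set y : Fin (n+1) → ℝ := b + s • (a - b) with hy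
    have hyC : y ∈ closure C := by
      have hcomb := hCconv.closure hb ha (by linarith : (0:ℝ) ≤ 1 - s) hs0.le (by ring)
      have : (1 - s) • b + s • a = y := by
        rw [hy]; funext i; simp [Pi.add_apply, Pi.smul_apply, smul_eq_mul]; ring
      rwa [this] at hcomb
    set x' : Fin (n+1) → ℝ := (2:ℝ) • x - y with hx'
    have hx'C : x' ∈ C := by
      apply hBC
      rw [Fin.sum_univ_succ]
      have h0 : x' 0 - c 0 = 0 := by
        rw [hx']
        simp only [Pi.sub_apply, Pi.smul_apply, smul_eq_mul, hy, Pi.add_apply]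
        rw [hab0] at *
        nlinarith [hsD]
      have hsucc : ∀ j : Fin n, x' (Fin.succ j) - c (Fin.succ j) = 2*(x (Fin.succ j) - ct j) := by
        intro j
        rw [hx']
        simp only [Pi.sub_apply, Pi.smul_apply, smul_eq_mul, hy, Pi.add_apply]
        rw [habs j, hct]
        ring
      rw [h0]
      have : ∑ j : Fin n, (x' (Fin.succ j) - c (Fin.succ j))^2
          = 4 * ∑ j : Fin n, (x (Fin.succ j) - ct j)^2 := by
        rw [Finset.mul_sum]
        refine Finset.sum_congr rfl fun j _ => ?_
        rw [hsucc j]; ring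
      rw [this]
      have hxt' : ∑ j : Fin n, (x (Fin.succ j) - ct j)^2 < (r/2)^2 := hxt
      nlinarith
    have hxcomb : x = (1/2 : ℝ) • x' + (1/2 : ℝ) • y := by
      rw [hx']; funext i
      simp [Pi.add_apply, Pi.smul_apply, Pi.sub_apply, smul_eq_mul]
      ring
    rw [hxcomb]
    exact hCconv.closure (subset_closure hx'C) hyC (by norm_num) (by norm_num) (by norm_num)
  -- volume of Z
  have hψ := MeasureTheory.volume_preserving_piFinSuccAbove (fun _ : Fin (n+1) => ℝ) 0
  have hBt_meas : MeasurableSet Bt := by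
    have hcont : Continuous (fun ζ : Fin n → ℝ => ∑ j, (ζ j - ct j)^2) := by
      apply continuous_finset_sum
      intro j _
      exact ((continuous_apply j).sub continuous_const).pow 2
    exact hcont.measurable measurableSet_Iio
  have hZeq : Z = (MeasurableEquiv.piFinSuccAbove (fun _ : Fin (n+1) => ℝ) 0) ⁻¹'
      ((Ioo M₀ (M₀ + D/2)) ×ˢ Bt) := by
    ext x
    have happ : (MeasurableEquiv.piFinSuccAbove (fun _ : Fin (n+1) => ℝ) 0) x
        = (x 0, fun j => x (Fin.succ j)) := by
      rfl
    rw [mem_preimage, happ, Set.mem_prod]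
    rfl
  have hvolZ : volume Z = ENNReal.ofReal (D/2) *
      ((ENNReal.ofReal (r/2))^n * ENNReal.ofReal
        (Real.sqrt Real.pi ^ n / Real.Gamma (n/2+1))) := by
    rw [hZeq, hψ.measure_preimage ((measurableSet_Ioo.prod hBt_meas).nullMeasurableSet)]
    rw [MeasureTheory.Measure.volume_eq_prod, MeasureTheory.Measure.prod_prod]
    congr 1
    · rw [Real.volume_Ioo]; congr 1; ring
    · -- volume of Bt
      set ctE : EuclideanSpace ℝ (Fin n) := (WithLp.equiv 2 (∀ _ : Fin n, ℝ)).symm ct with hctE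
      have hBt2 : Bt = (WithLp.toLp 2 : (Fin n → ℝ) → EuclideanSpace ℝ (Fin n)) ⁻¹' (ball ctE (r/2)) := by
        ext ζ
        rw [mem_preimage, mem_ball]
        have hd : dist (WithLp.toLp 2 ζ : EuclideanSpace ℝ (Fin n)) ctE
            = Real.sqrt (∑ j, (ζ j - ct j)^2) := by
          rw [EuclideanSpace.dist_eq]
          congr 1
          refine Finset.sum_congr rfl fun j _ => ?_
          rw [Real.dist_eq, sq_abs]
          rfl
        rw [hd, Real.sqrt_lt' (by positivity)]
        rfl
      rw [hBt2,
        (PiLp.volume_preserving_toLp (Fin n)).measure_preimage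
          measurableSet_ball.nullMeasurableSet,
        EuclideanSpace.volume_ball]
      simp [Fintype.card_fin]
  have hκ : 0 ≤ Real.sqrt Real.pi ^ n / Real.Gamma (n/2+1) := by
    have := Real.Gamma_pos_of_pos (show (0:ℝ) < n/2+1 by positivity)
    positivity
  calc ENNReal.ofReal ((D/2) * ((r/2)^n * (Real.sqrt Real.pi ^ n / Real.Gamma (n/2+1))))
      = volume Z := by
        rw [hvolZ, ENNReal.ofReal_mul (by positivity), ENNReal.ofReal_mul (by positivity),
          ENNReal.ofReal_pow (by positivity)]
    _ ≤ volume (closure C) := measure_mono hZsub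


lemma const_core (n : ℕ) (hn : 1 ≤ n) :
    (Real.sqrt Real.pi ^ (n+2) / Real.Gamma (((n+2:ℕ):ℝ)/2+1)) / (2*((n+2:ℝ))^(n+1))
      ≤ (Real.sqrt Real.pi ^ n / Real.Gamma ((n:ℝ)/2+1)) / 2^(n+1) := by
  have hΓpos : 0 < Real.Gamma ((n:ℝ)/2+1) := Real.Gamma_pos_of_pos (by positivity)
  have hrec : Real.Gamma (((n+2:ℕ):ℝ)/2+1) = ((n:ℝ)/2+1) * Real.Gamma ((n:ℝ)/2+1) := by
    have h1 : ((n+2:ℕ):ℝ)/2+1 = ((n:ℝ)/2+1)+1 := by push_cast; ring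
    rw [h1, Real.Gamma_add_one (by positivity)]
  have hsq : Real.sqrt Real.pi ^ (n+2) = Real.pi * Real.sqrt Real.pi ^ n := by
    rw [pow_add, Real.sq_sqrt Real.pi_pos.le]; ring
  have hcore : Real.pi * 2^(n+1) ≤ ((n+2:ℝ))^(n+2) := by
    have hπ : Real.pi ≤ 4 := Real.pi_le_four
    have h2 : (2:ℝ)^n ≤ 3^n := pow_le_pow_left₀ (by norm_num) (by norm_num) n
    have h3 : (3:ℝ)^(n+2) ≤ ((n+2:ℝ))^(n+2) := by
      apply pow_le_pow_left₀ (by norm_num)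
      have : (3:ℝ) ≤ (n:ℝ) + 2 := by
        have : (1:ℝ) ≤ (n:ℝ) := by exact_mod_cast hn
        linarith
      push_cast
      linarith
    have e1 : (2:ℝ)^(n+1) = 2*2^n := by ring
    have e2 : (3:ℝ)^(n+2) = 9*3^n := by ring
    have h2n : (0:ℝ) ≤ 2^n := by positivity
    calc Real.pi * 2^(n+1) ≤ 4 * 2^(n+1) := by
          apply mul_le_mul_of_nonneg_right hπ (by positivity)
      _ = 8 * 2^n := by rw [e1]; ring
      _ ≤ 9 * 3^n := by nlinarith
      _ = 3^(n+2) := e2.symm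
      _ ≤ ((n+2:ℝ))^(n+2) := h3
  rw [hrec, hsq]
  have hpos1 : (0:ℝ) < 2*((n+2:ℝ))^(n+1) := by positivity
  have hpos2 : (0:ℝ) < (2:ℝ)^(n+1) := by positivity
  rw [div_le_div_iff₀ hpos1 hpos2]
  have hpown : (0:ℝ) ≤ Real.sqrt Real.pi ^ n := by positivity
  have hrearr : Real.pi * Real.sqrt Real.pi ^ n / (((n:ℝ)/2+1) * Real.Gamma ((n:ℝ)/2+1)) * 2^(n+1)
      = (Real.pi * 2^(n+1)) * (Real.sqrt Real.pi ^ n / (((n:ℝ)/2+1) * Real.Gamma ((n:ℝ)/2+1))) := by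
    ring
  have hrearr2 : Real.sqrt Real.pi ^ n / Real.Gamma ((n:ℝ)/2+1) * (2*((n+2:ℝ))^(n+1))
      = ((n+2:ℝ))^(n+2) * (Real.sqrt Real.pi ^ n / (((n:ℝ)/2+1) * Real.Gamma ((n:ℝ)/2+1))) := by
    have hpow : ((n+2:ℝ))^(n+2) = ((n+2:ℝ))^(n+1) * ((n:ℝ)/2+1) * 2 := by
      rw [pow_succ]
      ring
    rw [hpow]
    field_simp
  rw [hrearr, hrearr2]
  apply mul_le_mul_of_nonneg_right hcore
  positivity

theorem perim_ge_diam_inradius (d : ℕ) (hd : 2 ≤ d)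
    (Ω : Set (EuclideanSpace ℝ (Fin d))) (hne : Ω.Nonempty) (hΩ : IsOpen Ω)
    (hbdd : IsBounded Ω) (hconv : Convex ℝ Ω) :
    perim d Ω ≥
      ((volume (ball (0 : EuclideanSpace ℝ (Fin d)) 1)).toReal /
          (2 * (d : ℝ) ^ ((d : ℝ) - 1))) *
        diam Ω * inradius d Ω ^ ((d : ℝ) - 2) := by
  obtain ⟨n, rfl⟩ : ∃ n, d = n + 2 := ⟨d - 2, by omega⟩
  clear hd
  -- notation and casts
  have hκpos : 0 ≤ Real.sqrt Real.pi ^ (n+2) / Real.Gamma (((n+2:ℕ):ℝ)/2+1) := by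
    have := Real.Gamma_pos_of_pos (show (0:ℝ) < ((n+2:ℕ):ℝ)/2+1 by positivity)
    positivity
  have hball1 : (volume (ball (0 : EuclideanSpace ℝ (Fin (n+2))) 1)).toReal
      = Real.sqrt Real.pi ^ (n+2) / Real.Gamma (((n+2:ℕ):ℝ)/2+1) := by
    rw [EuclideanSpace.volume_ball]
    rw [ENNReal.ofReal_one, one_pow, one_mul, ENNReal.toReal_ofReal]
    · simp [Fintype.card_fin]
    · simpa [Fintype.card_fin] using hκpos
  set κd : ℝ := Real.sqrt Real.pi ^ (n+2) / Real.Gamma (((n+2:ℕ):ℝ)/2+1) with hκd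
  set A : ℝ := κd / (2 * ((n+2:ℕ):ℝ) ^ (((n+2:ℕ):ℝ) - 1)) with hA
  have hApow : ((n+2:ℕ):ℝ) ^ (((n+2:ℕ):ℝ) - 1) = ((n+2:ℝ))^(n+1) := by
    have h1 : (((n+2:ℕ):ℝ)) - 1 = ((n+1:ℕ):ℝ) := by push_cast; ring
    rw [h1, Real.rpow_natCast]
    norm_num
  -- perim as toReal of μH with exponent n+1
  have hidx : ((n+2:ℕ):ℝ) - 1 = ((n:ℝ)+1) := by push_cast; ring
  have hperim : perim (n+2) Ω = (μH[((n:ℝ)+1)] (frontier Ω)).toReal := by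
    rw [perim, hidx]
  have hfin : μH[((n:ℝ)+1)] (frontier Ω) ≠ ⊤ := by
    have h := frontier_hausdorff_lt_top (m := n+1) hΩ hne hbdd hconv
    have hidx2 : (((n+1:ℕ)):ℝ) = ((n:ℝ)+1) := by push_cast; ring
    rw [hidx2] at h
    exact h.ne
  -- inradius facts
  set S : Set ℝ := { r : ℝ | ∃ x, ball x r ⊆ Ω } with hS
  have hSne : S.Nonempty := by
    obtain ⟨x, hx⟩ := hne
    obtain ⟨ε, hε, hball⟩ := Metric.isOpen_iff.1 hΩ x hx
    exact ⟨ε, x, hball⟩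
  obtain ⟨R₁, hR₁⟩ := hbdd.subset_ball 0
  have hSbdd : BddAbove S := by
    refine ⟨max 0 (4*R₁ + 1), fun r hr => ?_⟩
    rcases le_or_gt r 0 with h | h
    · exact h.trans (le_max_left _ _)
    refine le_max_of_le_right ?_
    obtain ⟨x, hx⟩ := hr
    have hxm : x ∈ ball (0 : EuclideanSpace ℝ (Fin (n+2))) R₁ :=
      hR₁ (hx (mem_ball_self h))
    have hx1 : ‖x‖ < R₁ := by simpa using hxm
    set e₀ : EuclideanSpace ℝ (Fin (n+2)) := EuclideanSpace.single 0 1 with he₀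
    have he₀n : ‖e₀‖ = 1 := by simp [he₀, EuclideanSpace.norm_single]
    have hmem : x + (r/2) • e₀ ∈ ball x r := by
      rw [mem_ball, dist_eq_norm]
      have : x + (r/2) • e₀ - x = (r/2) • e₀ := by abel
      rw [this, norm_smul, he₀n, Real.norm_eq_abs, abs_of_pos (by linarith)]
      linarith
    have hm2 : x + (r/2) • e₀ ∈ ball (0 : EuclideanSpace ℝ (Fin (n+2))) R₁ := hR₁ (hx hmem)
    have hm3 : ‖x + (r/2) • e₀‖ < R₁ := by simpa using hm2
    have : r/2 - ‖x‖ ≤ ‖x + (r/2) • e₀‖ := by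
      have h4 : ‖(r/2) • e₀‖ ≤ ‖x + (r/2) • e₀‖ + ‖x‖ := by
        calc ‖(r/2) • e₀‖ = ‖(x + (r/2) • e₀) - x‖ := by congr 1; abel
          _ ≤ ‖x + (r/2) • e₀‖ + ‖x‖ := norm_sub_le _ _
      rw [norm_smul, he₀n, Real.norm_eq_abs, abs_of_pos (by linarith)] at h4
      linarith
    have hR₁pos : 0 < R₁ := lt_of_le_of_lt (norm_nonneg x) hx1
    linarith
  set ρ : ℝ := sSup S with hρ
  have hinr : inradius (n+2) Ω = ρ := rfl
  have hρpos : 0 < ρ := by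
    obtain ⟨x, hx⟩ := hne
    obtain ⟨ε, hε, hballx⟩ := Metric.isOpen_iff.1 hΩ x hx
    exact lt_of_lt_of_le hε (le_csSup hSbdd ⟨x, hballx⟩)
  -- unit vector
  set e₀ : EuclideanSpace ℝ (Fin (n+2)) := EuclideanSpace.single 0 1 with he₀
  have he₀n : ‖e₀‖ = 1 := by simp [he₀, EuclideanSpace.norm_single]
  -- diameter attained
  have hKcpt : IsCompact (closure Ω) := hbdd.isCompact_closure
  obtain ⟨x₁, hx₁⟩ := hne
  have hKne : ((closure Ω) ×ˢ (closure Ω)).Nonempty :=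
    ⟨(x₁, x₁), Set.mk_mem_prod (subset_closure hx₁) (subset_closure hx₁)⟩
  obtain ⟨⟨p, q⟩, hpqmem, hmax⟩ := (hKcpt.prod hKcpt).exists_isMaxOn hKne
    (continuous_dist.continuousOn :
      ContinuousOn (fun z : _ × _ => dist z.1 z.2) ((closure Ω) ×ˢ (closure Ω)))
  have hp : p ∈ closure Ω := hpqmem.1
  have hq : q ∈ closure Ω := hpqmem.2
  have hdiam : diam Ω = dist p q := by
    apply le_antisymm
    · rw [← Metric.diam_closure]
      apply Metric.diam_le_of_forall_dist_le dist_nonneg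
      intro x hx y hy
      exact isMaxOn_iff.1 hmax (x, y) (Set.mk_mem_prod hx hy)
    · rw [← Metric.diam_closure]
      exact dist_le_diam_of_mem hbdd.closure hp hq
  -- toReal conversion
  have htoReal : ∀ {b : ℝ}, 0 ≤ b → ENNReal.ofReal b ≤ μH[((n:ℝ)+1)] (frontier Ω) →
      b ≤ perim (n+2) Ω := by
    intro b hb h
    rw [hperim]
    calc b = (ENNReal.ofReal b).toReal := (ENNReal.toReal_ofReal hb).symm
      _ ≤ _ := ENNReal.toReal_mono hfin h
  -- key bound for each admissible r
  have hkey : ∀ r : ℝ, 0 < r → r < ρ → A * diam Ω * r^n ≤ perim (n+2) Ω := by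
    intro r hr0 hrρ
    obtain ⟨r', hr'S, hrr'⟩ := exists_lt_of_lt_csSup hSne hrρ
    obtain ⟨x₀, hx₀⟩ := hr'S
    have hballr : ball x₀ r ⊆ Ω := (ball_subset_ball hrr'.le).trans hx₀
    have hdpos : 0 < diam Ω := by
      have h1 : x₀ ∈ Ω := hballr (mem_ball_self hr0)
      have h2 : x₀ + (r/2) • e₀ ∈ Ω := by
        apply hballr
        rw [mem_ball, dist_eq_norm]
        have h3 : x₀ + (r/2) • e₀ - x₀ = (r/2) • e₀ := by abel
        rw [h3, norm_smul, he₀n, Real.norm_eq_abs, abs_of_pos (by linarith)]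
        linarith
      have h4 := dist_le_diam_of_mem hbdd h2 h1
      have h5 : dist (x₀ + (r/2) • e₀) x₀ = r/2 := by
        rw [dist_eq_norm]
        have h3 : x₀ + (r/2) • e₀ - x₀ = (r/2) • e₀ := by abel
        rw [h3, norm_smul, he₀n, Real.norm_eq_abs, abs_of_pos (by linarith)]
        simp
      rw [h5] at h4
      linarith
    have hpq : p ≠ q := by
      intro h
      rw [hdiam, h, dist_self] at hdpos
      exact lt_irrefl _ hdpos
    obtain ⟨C, a, b, c, hCconv, hvol, ha, hb, hab0, habs, hBC⟩ :=
      project_setup (n := n) hΩ hbdd hconv hp hq hpq hr0 hballr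
    rcases Nat.eq_zero_or_pos n with hn0 | hnpos
    · subst hn0
      have hseg := seg_bound hCconv ha hb dist_nonneg hab0
      have hch := htoReal dist_nonneg (le_trans hseg hvol)
      have hA1 : A ≤ 1 := by
        have harg : ((0+2:ℕ):ℝ)/2+1 = 2 := by norm_num
        have hsqpi2 : Real.sqrt Real.pi ^ (0+2) = Real.pi := by
          norm_num [Real.sq_sqrt Real.pi_pos.le]
        have hκ2 : κd = Real.pi := by
          rw [hκd, harg, Real.Gamma_two, hsqpi2, div_one]
        rw [hA, hκ2, hApow]
        have h4 : ((0:ℕ):ℝ) + 2 = 2 := by norm_num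
        rw [h4]
        rw [div_le_one (by norm_num)]
        norm_num
        linarith [Real.pi_le_four]
      calc A * diam Ω * r^0 = A * diam Ω := by ring
        _ ≤ 1 * diam Ω := by
            apply mul_le_mul_of_nonneg_right hA1 (diam_nonneg)
        _ = dist p q := by rw [one_mul, hdiam]
        _ ≤ perim (0+2) Ω := hch
    · -- cylinder case
      have hcyl := cyl_bound hnpos hCconv ha hb dist_nonneg hab0 habs hr0 hBC
      set κn : ℝ := Real.sqrt Real.pi ^ n / Real.Gamma ((n:ℝ)/2+1) with hκn
      have hκnpos : 0 < κn := by
        have := Real.Gamma_pos_of_pos (show (0:ℝ) < (n:ℝ)/2+1 by positivity)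
        rw [hκn]
        positivity
      have hB0 : 0 ≤ (dist p q/2) * ((r/2)^n * κn) := by positivity
      have hch := htoReal hB0 (le_trans hcyl hvol)
      refine le_trans ?_ hch
      have hconst := const_core n hnpos
      have hre : (dist p q/2) * ((r/2)^n * κn) = (κn / 2^(n+1)) * dist p q * r^n := by
        rw [div_pow]
        field_simp
        ring
      rw [hre, hdiam, hA, hApow]
      apply mul_le_mul_of_nonneg_right _ (by positivity)
      apply mul_le_mul_of_nonneg_right _ (dist_nonneg)
      rw [hκd]
      exact hconst
  -- limit r → ρ
  have hlim : Tendsto (fun r : ℝ => A * diam Ω * r^n) (𝓝[<] ρ) (𝓝 (A * diam Ω * ρ^n)) :=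
    ((((continuous_const : Continuous fun _ : ℝ => A * diam Ω).mul (continuous_pow n)).tendsto ρ).mono_left nhdsWithin_le_nhds).congr
      (fun r => rfl)
  have hev : ∀ᶠ r in 𝓝[<] ρ, A * diam Ω * r^n ≤ perim (n+2) Ω := by
    filter_upwards [Ioo_mem_nhdsLT_of_mem (show ρ ∈ Ioc (0:ℝ) ρ from ⟨hρpos, le_refl ρ⟩)]
      with r hr
    exact hkey r hr.1 hr.2
  have hfinal : A * diam Ω * ρ^n ≤ perim (n+2) Ω := by
    have := le_of_tendsto hlim hev
    calc A * diam Ω * ρ^n = A * diam Ω * ρ^n := rfl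
      _ ≤ _ := this
  -- match the required form
  rw [ge_iff_le, hball1]
  have hexp : inradius (n+2) Ω ^ (((n+2:ℕ):ℝ) - 2) = ρ^n := by
    rw [hinr, show (((n+2:ℕ):ℝ)) - 2 = ((n:ℕ):ℝ) by push_cast; ring, Real.rpow_natCast]
  rw [hexp, ← hA]
  exact hfinal
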